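/- Let X be the Erdős–Rényi polarity graph of order q with loops retained: X has n = q²+q+1 vertices, is (q+1)-regular, has q+1 looped vertices, and its adjacency eigenvalues are q+1 and ±sqrt(q). Then every independent set S satisfies |S| ≤ (sqrt(q) + sqrt(q + 4(q+1)(q+sqrt(q)+1)/(q²+q+1))) / (2(q+sqrt(q)+1)/(q²+q+1)). -/

import Mathlib

open Matrix Finset

private lemma quad_bound_aux (a s k Q : ℝ) (ha : 0 < a) (hs : 0 ≤ s) (hQ : 0 ≤ Q)
    (key : a * k ^ 2 - s * k ≤ Q) :
    k * (2 * a) ≤ s + Real.sqrt (s ^ 2 + 4 * a * Q) := by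
  have hsqrt : 2 * a * k - s ≤ Real.sqrt (s ^ 2 + 4 * a * Q) := by
    rcases le_or_gt (2 * a * k - s) 0 with h | h
    · exact le_trans h (Real.sqrt_nonneg _)
    · rw [show (2 * a * k - s) = Real.sqrt ((2 * a * k - s) ^ 2) from
        (Real.sqrt_sq h.le).symm]
      apply Real.sqrt_le_sqrt
      nlinarith [mul_le_mul_of_nonneg_left key ha.le]
  linarith

/-- Bound for the Erdős–Rényi polarity graph `ER(q)` with loops retained:
`n = q²+q+1` vertices, `(q+1)`-regular, `q+1` looped vertices, adjacency eigenvalues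
`q+1` and `±√q`; every independent set `S` satisfies the stated bound. -/
theorem stmt14 (q : ℕ) (hq : 2 ≤ q) (n : ℕ) (hn : n = q ^ 2 + q + 1)
    (A : Matrix (Fin n) (Fin n) ℝ) (hsym : A.IsSymm)
    (h01 : ∀ i j, A i j = 0 ∨ A i j = 1)
    (hreg : ∀ i, ∑ j, A i j = (q : ℝ) + 1)
    (hloops : (∑ i, A i i) = (q : ℝ) + 1)
    (heig : ∀ (μ : ℝ) (v : Fin n → ℝ), v ≠ 0 → A.mulVec v = μ • v →
      μ = (q : ℝ) + 1 ∨ μ = Real.sqrt q ∨ μ = -Real.sqrt q)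
    (S : Finset (Fin n)) (hind : ∀ i ∈ S, ∀ j ∈ S, i ≠ j → A i j = 0) :
    (S.card : ℝ) ≤
      (Real.sqrt q + Real.sqrt ((q : ℝ) + 4 * ((q : ℝ) + 1)
          * ((q : ℝ) + Real.sqrt q + 1) / ((q : ℝ) ^ 2 + q + 1)))
        / (2 * ((q : ℝ) + Real.sqrt q + 1) / ((q : ℝ) ^ 2 + q + 1)) := by
  set s : ℝ := Real.sqrt q with hs
  have hs0 : 0 ≤ s := Real.sqrt_nonneg _
  have hsq : s ^ 2 = (q : ℝ) := Real.sq_sqrt (by positivity)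
  have hn' : (n : ℝ) = (q : ℝ) ^ 2 + q + 1 := by rw [hn]; push_cast; ring
  have hnpos : (0 : ℝ) < (n : ℝ) := by rw [hn']; positivity
  have hAnn : ∀ i j, (0 : ℝ) ≤ A i j := by
    intro i j; rcases h01 i j with h | h <;> rw [h] <;> norm_num
  -- A is Hermitian
  have hA : A.IsHermitian := by
    show Aᴴ = A
    ext i j
    simp [Matrix.conjTranspose_apply, hsym.apply i j]
  -- B = A + s • 1 is positive semidefinite
  have hB : (A + s • (1 : Matrix (Fin n) (Fin n) ℝ)).IsHermitian := by
    apply hA.add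
    show (s • (1 : Matrix (Fin n) (Fin n) ℝ))ᴴ = _
    simp
  have hBpsd : (A + s • (1 : Matrix (Fin n) (Fin n) ℝ)).PosSemidef := by
    refine hB.posSemidef_iff_eigenvalues_nonneg.mpr fun i => show (0 : ℝ) ≤ hB.eigenvalues i from ?_
    have hv := hB.mulVec_eigenvectorBasis i
    set v : Fin n → ℝ := ⇑(hB.eigenvectorBasis i) with hvdef
    have hvne : v ≠ 0 := by
      intro h0
      have hnorm := hB.eigenvectorBasis.orthonormal.1 i
      rw [show (hB.eigenvectorBasis i : EuclideanSpace ℝ (Fin n)) = 0 from by simpa [hvdef] using congrArg (WithLp.toLp 2) h0] at hnorm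
      simp at hnorm
    have hAv : A.mulVec v = (hB.eigenvalues i - s) • v := by
      have hBv : A.mulVec v + s • v = hB.eigenvalues i • v := by
        have := hv
        rwa [Matrix.add_mulVec, Matrix.smul_mulVec, Matrix.one_mulVec] at this
      have : A.mulVec v = hB.eigenvalues i • v - s • v := by
        rw [← hBv]; abel
      rw [this, sub_smul]
    have hq0 : (0 : ℝ) ≤ (q : ℝ) := by positivity
    rcases heig _ _ hvne hAv with h | h | h
    · linarith
    · linarith
    · linarith
  -- notation
  set k : ℝ := (S.card : ℝ) with hk
  have hk0 : 0 ≤ k := Nat.cast_nonneg _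
  set c : ℝ := k / n with hc
  set x : Fin n → ℝ := fun i => if i ∈ S then 1 else 0 with hx
  set y : Fin n → ℝ := fun i => x i - c with hy
  have hxsum : ∀ f : Fin n → ℝ, ∑ i, x i * f i = ∑ i ∈ S, f i := by
    intro f
    simp only [hx, ite_mul, one_mul, zero_mul]
    rw [Finset.sum_ite_mem, Finset.univ_inter]
  have hxk : ∑ i, x i = k := by
    have := hxsum (fun _ => 1)
    simpa using this
  -- column sums
  have hcol : ∀ j, ∑ i, A i j = (q : ℝ) + 1 := by
    intro j
    calc ∑ i, A i j = ∑ i, A j i := by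
          exact Finset.sum_congr rfl fun i _ => hsym.apply j i
      _ = (q : ℝ) + 1 := hreg j
  -- inner sums
  have hinner : ∀ i, ∑ j, A i j * x j = ∑ j ∈ S, A i j := by
    intro i
    calc ∑ j, A i j * x j = ∑ j, x j * A i j := by
          exact Finset.sum_congr rfl fun j _ => mul_comm _ _
      _ = ∑ j ∈ S, A i j := hxsum _
  -- x⊤ A x = sum of loops on S
  have hT1 : ∑ i, x i * (∑ j, A i j * x j) = ∑ i ∈ S, A i i := by
    rw [hxsum]
    apply Finset.sum_congr rfl
    intro i hi
    rw [hinner]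
    exact Finset.sum_eq_single i (fun j hj hji => hind i hi j hj (Ne.symm hji))
      (fun h => absurd hi h)
  have hT1le : ∑ i ∈ S, A i i ≤ (q : ℝ) + 1 := by
    rw [← hloops]
    apply Finset.sum_le_sum_of_subset_of_nonneg (Finset.subset_univ S)
    intro i _ _
    exact hAnn i i
  -- total sum of A x over rows
  have hAx : ∑ i, (∑ j, A i j * x j) = k * ((q : ℝ) + 1) := by
    rw [Finset.sum_comm]
    calc ∑ j, ∑ i, A i j * x j = ∑ j, x j * ∑ i, A i j := by
          apply Finset.sum_congr rfl
          intro j _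
          rw [Finset.mul_sum]
          exact Finset.sum_congr rfl fun i _ => mul_comm _ _
      _ = ∑ j ∈ S, ∑ i, A i j := hxsum _
      _ = ∑ j ∈ S, ((q : ℝ) + 1) := Finset.sum_congr rfl fun j _ => hcol j
      _ = k * ((q : ℝ) + 1) := by rw [Finset.sum_const, nsmul_eq_mul]
  have hxAx2 : ∑ i, x i * (∑ j, A i j) = k * ((q : ℝ) + 1) := by
    rw [hxsum]
    calc ∑ i ∈ S, ∑ j, A i j = ∑ i ∈ S, ((q : ℝ) + 1) :=
          Finset.sum_congr rfl fun i _ => hreg i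
      _ = k * ((q : ℝ) + 1) := by rw [Finset.sum_const, nsmul_eq_mul]
  -- PSD inequality applied to y
  have hpsd := hBpsd.dotProduct_mulVec_nonneg y
  have hdot : dotProduct (star y) ((A + s • (1 : Matrix (Fin n) (Fin n) ℝ)) *ᵥ y)
      = (∑ i, y i * (∑ j, A i j * y j)) + s * (∑ i, y i * y i) := by
    rw [Matrix.add_mulVec, Matrix.smul_mulVec, Matrix.one_mulVec]
    simp only [star_trivial, dotProduct_add, dotProduct_smul, smul_eq_mul]
    congr 1
  rw [hdot] at hpsd
  -- expand y in terms of x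
  have hysum : ∑ i, y i * (∑ j, A i j * y j)
      = (∑ i, x i * (∑ j, A i j * x j)) - c * (∑ i, x i * (∑ j, A i j))
        - c * (∑ i, (∑ j, A i j * x j)) + c ^ 2 * (∑ i, (∑ j, A i j)) := by
    have hinner' : ∀ i, ∑ j, A i j * y j = (∑ j, A i j * x j) - c * (∑ j, A i j) := by
      intro i
      simp only [hy, mul_sub]
      rw [Finset.sum_sub_distrib]
      congr 1
      rw [Finset.mul_sum]
      exact Finset.sum_congr rfl fun j _ => mul_comm _ _
    calc ∑ i, y i * (∑ j, A i j * y j)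
        = ∑ i, ((x i * (∑ j, A i j * x j)) - c * (x i * (∑ j, A i j))
            - c * (∑ j, A i j * x j) + c ^ 2 * (∑ j, A i j)) := by
          apply Finset.sum_congr rfl
          intro i _
          rw [hinner' i]
          simp only [hy]
          ring
      _ = _ := by
          rw [Finset.sum_add_distrib, Finset.sum_sub_distrib, Finset.sum_sub_distrib,
            ← Finset.mul_sum, ← Finset.mul_sum, ← Finset.mul_sum]
  have hrowtot : ∑ i : Fin n, (∑ j, A i j) = (n : ℝ) * ((q : ℝ) + 1) := by
    calc ∑ i : Fin n, (∑ j, A i j) = ∑ i : Fin n, ((q : ℝ) + 1) :=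
          Finset.sum_congr rfl fun i _ => hreg i
      _ = (n : ℝ) * ((q : ℝ) + 1) := by rw [Finset.sum_const, nsmul_eq_mul]; simp
  have hyy : ∑ i, y i * y i = k - 2 * c * k + c ^ 2 * n := by
    have hxx : ∑ i, x i * x i = k := by
      rw [hxsum]
      simp only [hx]
      rw [Finset.sum_congr rfl fun i hi => if_pos hi, Finset.sum_const, nsmul_eq_mul, mul_one]
    calc ∑ i, y i * y i = ∑ i, (x i * x i - 2 * c * x i + c ^ 2) := by
          apply Finset.sum_congr rfl; intro i _; simp only [hy]; ring
      _ = (∑ i, x i * x i) - 2 * c * (∑ i, x i) + c ^ 2 * n := by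
          rw [Finset.sum_add_distrib, Finset.sum_sub_distrib, ← Finset.mul_sum,
            Finset.sum_const, nsmul_eq_mul, Finset.card_univ, Fintype.card_fin]
          ring
      _ = k - 2 * c * k + c ^ 2 * n := by rw [hxx, hxk]
  rw [hysum, hT1, hxAx2, hAx, hrowtot, hyy] at hpsd
  have hnne : (n : ℝ) ≠ 0 := ne_of_gt hnpos
  -- polynomial form of the PSD inequality
  have hpoly := mul_nonneg hpsd (sq_nonneg (n : ℝ))
  have hpoly' : 0 ≤ (∑ i ∈ S, A i i) * (n : ℝ) ^ 2
      - ((q : ℝ) + 1 + s) * k ^ 2 * (n : ℝ) + s * k * (n : ℝ) ^ 2 :=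
    le_of_le_of_eq hpoly (by rw [hc]; field_simp; ring)
  set a : ℝ := ((q : ℝ) + s + 1) / (n : ℝ) with ha
  have hapos : 0 < a := by
    apply div_pos _ hnpos
    have hq0 : (0 : ℝ) < (q : ℝ) := by positivity
    linarith
  have h3 : ((q : ℝ) + 1 + s) * k ^ 2 * (n : ℝ)
      ≤ ((q : ℝ) + 1) * (n : ℝ) ^ 2 + s * k * (n : ℝ) ^ 2 := by
    nlinarith [hpoly', hT1le, sq_nonneg (n : ℝ)]
  have h4 : ((q : ℝ) + s + 1) * k ^ 2 ≤ ((q : ℝ) + 1 + s * k) * (n : ℝ) :=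
    le_of_mul_le_mul_right (by linarith [h3]) hnpos
  have hkey : a * k ^ 2 - s * k ≤ (q : ℝ) + 1 := by
    rw [ha, div_mul_eq_mul_div, sub_le_iff_le_add, div_le_iff₀ hnpos]
    linarith [h4]
  -- conclude
  have hD : (q : ℝ) + 4 * ((q : ℝ) + 1) * ((q : ℝ) + s + 1) / ((q : ℝ) ^ 2 + q + 1)
      = s ^ 2 + 4 * a * ((q : ℝ) + 1) := by
    rw [hsq, ha, hn']; ring
  have h2a : 2 * ((q : ℝ) + s + 1) / ((q : ℝ) ^ 2 + q + 1) = 2 * a := by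
    rw [ha, hn']; ring
  rw [hD, h2a, le_div_iff₀ (by positivity : (0 : ℝ) < 2 * a)]
  exact quad_bound_aux a s k ((q : ℝ) + 1) hapos hs0 (by positivity) hkey
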